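/- Let G ≤ Sym(M) act 2-homogeneously on M, where |M| = m ≥ 5, let V = F_2^m with G acting by permuting coordinates, and let C be a G-invariant F_2-subspace of V with minimum distance δ = 3. Then C is a perfect code, i.e., every vertex of V is at Hamming distance at most 1 from exactly one codeword of C; moreover C is (X,1)-neighbour-transitive, where X = T_C ⋊ G = {v ↦ v^σ + c : σ ∈ G, c ∈ C}. -/

import Mathlib

open Equiv

namespace Paper

/-- A Hamming-graph automorphism of `Fin m → Q` given by entrywise permutations `h`
and a permutation `σ` of the entries. -/
def IsQAutPair {m : ℕ} {Q : Type*} (g : Perm (Fin m → Q)) (h : Fin m → Perm Q)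
    (σ : Perm (Fin m)) : Prop :=
  ∀ α i, g α i = h i (α (σ.symm i))

/-- `g` is an automorphism of the Hamming graph `H(m,q)`. -/
def IsQAut {m : ℕ} {Q : Type*} (g : Perm (Fin m → Q)) : Prop :=
  ∃ h σ, IsQAutPair g h σ

/-- The permutation group `X_i^{Q_i}` induced on the alphabet in entry `i`
by the stabiliser in `X` of the entry `i`. -/
def indQ {m : ℕ} {Q : Type*} (X : Set (Perm (Fin m → Q))) (i : Fin m) : Set (Perm Q) :=
  {π | ∃ g ∈ X, ∃ h σ, IsQAutPair g h σ ∧ σ i = i ∧ h i = π}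

/-- `C_s`, the set of vertices at Hamming distance exactly `s` from the code `C`. -/
def distSet {m : ℕ} {Q : Type*} [DecidableEq Q] (C : Set (Fin m → Q)) (s : ℕ) :
    Set (Fin m → Q) :=
  {v | (∃ c ∈ C, hammingDist v c = s) ∧ ∀ c ∈ C, s ≤ hammingDist v c}

/-- `C` is `(X,s)`-neighbour-transitive: `X` acts transitively on each of
`C = C_0, C_1, …, C_s`. -/
def NbrTrans {m : ℕ} {Q : Type*} [DecidableEq Q] (X : Set (Perm (Fin m → Q)))
    (C : Set (Fin m → Q)) (s : ℕ) : Prop :=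
  ∀ j ≤ s, ∀ u ∈ distSet C j, ∀ v ∈ distSet C j, ∃ g ∈ X, g u = v

/-- `δ` is the minimum distance of the code `C`. -/
def IsMinDist {m : ℕ} {Q : Type*} [DecidableEq Q] (C : Set (Fin m → Q)) (δ : ℕ) : Prop :=
  (∃ u ∈ C, ∃ v ∈ C, u ≠ v ∧ hammingDist u v = δ) ∧
  ∀ u ∈ C, ∀ v ∈ C, u ≠ v → δ ≤ hammingDist u v

/-- The vertex set `V = F_2^m` of the binary Hamming graph `H(m,2)`. -/
abbrev BV (m : ℕ) : Type := Fin m → ZMod 2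

/-- `g` is an automorphism of the binary Hamming graph `H(m,2)`:
`g : v ↦ v^σ + c` for some `σ ∈ Sym(M)` and `c ∈ V`. -/
def IsB2Aut {m : ℕ} (g : Perm (BV m)) : Prop :=
  ∃ (σ : Perm (Fin m)) (c : BV m), ∀ v, g v = (fun i => v (σ.symm i)) + c

/-- The dual of a binary code under the standard inner product. -/
def dualCode {m : ℕ} (D : Set (BV m)) : Set (BV m) :=
  {w | ∀ v ∈ D, (∑ i, v i * w i) = 0}


private lemma zmod2_ne_zero {x : ZMod 2} (h : x ≠ 0) : x = 1 := by
  revert h; revert x; decide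

private lemma hn_comp {m : ℕ} (v : BV m) (σ : Perm (Fin m)) :
    hammingNorm (fun i => v (σ.symm i)) = hammingNorm v := by
  unfold hammingNorm
  apply Finset.card_bij (fun i _ => σ.symm i)
  · intro a ha; simp_all
  · intro a _ b _ h; exact σ.symm.injective h
  · intro b hb; exact ⟨σ b, by simp_all, by simp⟩

private lemma norm_one {m : ℕ} {e : BV m} (h : hammingNorm e = 1) :
    ∃ i, e = Pi.single i 1 := by
  unfold hammingNorm at h
  obtain ⟨i, hi⟩ := Finset.card_eq_one.mp h
  have hmem : ∀ k, e k ≠ 0 ↔ k = i := by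
    intro k
    constructor
    · intro hk
      have : k ∈ ({i} : Finset (Fin m)) := hi ▸ (by simp [hk])
      simpa using this
    · intro hk
      rw [hk]
      have : i ∈ Finset.filter (fun k => e k ≠ 0) Finset.univ := by
        rw [show Finset.filter (fun k => e k ≠ 0) Finset.univ = {i} from hi]
        exact Finset.mem_singleton_self i
      simpa using this
  refine ⟨i, funext fun k => ?_⟩
  by_cases hk : k = i
  · subst hk; simp [zmod2_ne_zero ((hmem k).mpr rfl)]
  · have h0 : e k = 0 := by
      by_contra hne; exact hk ((hmem k).mp hne)
    simp [Pi.single_apply, hk, h0]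

private lemma hd_eq_hn_sub {m : ℕ} (x y : BV m) :
    hammingDist x y = hammingNorm (x - y) := by
  simp_rw [hammingNorm, hammingDist, Pi.sub_apply, ne_eq, sub_eq_zero]

private def bperm {m : ℕ} (σ : Perm (Fin m)) (c : BV m) : Perm (BV m) where
  toFun v := (fun i => v (σ.symm i)) + c
  invFun w := fun i => (w - c) (σ i)
  left_inv v := by funext i; simp
  right_inv w := by funext i; simp

theorem stmt9 (m : ℕ) (hm : 5 ≤ m)
    (G : Subgroup (Perm (Fin m)))
    (hG : ∀ i j k l : Fin m, i ≠ j → k ≠ l →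
      ∃ σ ∈ G, (σ i = k ∧ σ j = l) ∨ (σ i = l ∧ σ j = k))
    (C : Submodule (ZMod 2) (BV m))
    (hInv : ∀ σ ∈ G, ∀ v ∈ C, (fun i => v (σ.symm i)) ∈ C)
    (hδ : IsMinDist (C : Set (BV m)) 3)
    (X : Set (Perm (BV m)))
    (hX : X = {g | ∃ σ ∈ G, ∃ c ∈ C, ∀ v, g v = (fun i => v (σ.symm i)) + c}) :
    (∀ v : BV m, ∃! c, c ∈ (C : Set (BV m)) ∧ hammingDist v c ≤ 1) ∧
    NbrTrans X (C : Set (BV m)) 1 := by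
  classical
  -- G is transitive
  have hGtrans : ∀ i j : Fin m, ∃ σ ∈ G, σ i = j := by
    intro i j
    by_cases hij : i = j
    · exact ⟨1, G.one_mem, by simp [hij]⟩
    · obtain ⟨k, hki, hkj⟩ : ∃ k : Fin m, k ≠ i ∧ k ≠ j := by
        by_contra hcon
        push_neg at hcon
        have hsub : (Finset.univ : Finset (Fin m)) ⊆ {i, j} := by
          intro k _
          by_cases hk : k = i
          · simp [hk]
          · simp [hcon k hk]
        have h1 : (Finset.univ : Finset (Fin m)).card = m := by simp
        have h2 : ({i, j} : Finset (Fin m)).card ≤ 2 :=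
          (Finset.card_insert_le _ _).trans (by simp)
        have := Finset.card_le_card hsub
        omega
      obtain ⟨σ, hσG, hcs⟩ := hG i k j k (Ne.symm hki) (Ne.symm hkj)
      rcases hcs with ⟨h1, _⟩ | ⟨h1, h2⟩
      · exact ⟨σ, hσG, h1⟩
      · exact ⟨σ * σ, G.mul_mem hσG hσG, by
          rw [Perm.mul_apply, h1, h2]⟩
  -- weight-3 codeword through any pair
  have hw3 : ∀ i j : Fin m, i ≠ j → ∃ w ∈ C, hammingNorm w = 3 ∧ w i ≠ 0 ∧ w j ≠ 0 := by
    obtain ⟨⟨u, hu, v, hv, huv, hd⟩, _⟩ := hδ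
    have hw0C : u - v ∈ C := Submodule.sub_mem C hu hv
    have hw0n : hammingNorm (u - v) = 3 := by
      rw [← hd, hd_eq_hn_sub]
    obtain ⟨a, b, hab, ha, hb⟩ : ∃ a b : Fin m, a ≠ b ∧ (u - v) a ≠ 0 ∧ (u - v) b ≠ 0 := by
      have hcard : 1 < (Finset.filter (fun k => (u - v) k ≠ 0) Finset.univ).card := by
        unfold hammingNorm at hw0n; omega
      obtain ⟨a, ha, b, hb, hab⟩ := Finset.one_lt_card.mp hcard
      exact ⟨a, b, hab, (Finset.mem_filter.mp ha).2, (Finset.mem_filter.mp hb).2⟩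
    intro i j hij
    obtain ⟨σ, hσG, hcs⟩ := hG a b i j hab hij
    refine ⟨fun k => (u - v) (σ.symm k), hInv σ hσG _ hw0C,
      by rw [hn_comp]; exact hw0n, ?_, ?_⟩
    · show (u - v) (σ.symm i) ≠ 0
      rcases hcs with ⟨h1, _⟩ | ⟨_, h2⟩
      · rw [← h1, Equiv.symm_apply_apply]; exact ha
      · rw [← h2, Equiv.symm_apply_apply]; exact hb
    · show (u - v) (σ.symm j) ≠ 0
      rcases hcs with ⟨_, h2⟩ | ⟨h1, _⟩
      · rw [← h2, Equiv.symm_apply_apply]; exact hb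
      · rw [← h1, Equiv.symm_apply_apply]; exact ha
  -- covering radius 1
  have hcover : ∀ n : ℕ, ∀ v : BV m, ∀ c ∈ C, hammingDist v c ≤ n →
      ∃ c' ∈ C, hammingDist v c' ≤ 1 := by
    intro n
    induction n with
    | zero => intro v c hc hd; exact ⟨c, hc, hd.trans (by omega)⟩
    | succ n ih =>
      intro v c hc hd
      by_cases h1 : hammingDist v c ≤ 1
      · exact ⟨c, hc, h1⟩
      push_neg at h1
      have hen : hammingDist v c = hammingNorm (v - c) := hd_eq_hn_sub v c
      set e := v - c with he
      have hcard : 1 < (Finset.filter (fun k => e k ≠ 0) Finset.univ).card := by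
        unfold hammingNorm at hen; omega
      obtain ⟨i, hi, j, hj, hij⟩ := Finset.one_lt_card.mp hcard
      have hei : e i ≠ 0 := (Finset.mem_filter.mp hi).2
      have hej : e j ≠ 0 := (Finset.mem_filter.mp hj).2
      obtain ⟨w, hwC, hwn, hwi, hwj⟩ := hw3 i j hij
      refine ih v (c + w) (C.add_mem hc hwC) ?_
      -- bound the new distance
      set S := Finset.filter (fun k => e k ≠ 0) Finset.univ with hS
      set T := Finset.filter (fun k => w k ≠ 0) Finset.univ with hT
      set U := Finset.filter (fun k => (e - w) k ≠ 0) Finset.univ with hU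
      have hiS : i ∈ S := hi
      have hjS : j ∈ S := hj
      have hiT : i ∈ T := by simp [hT, hwi]
      have hjT : j ∈ T := by simp [hT, hwj]
      have hijS : ({i, j} : Finset (Fin m)) ⊆ S := by
        intro k hk
        rcases Finset.mem_insert.mp hk with rfl | hk
        · exact hiS
        · rw [Finset.mem_singleton.mp hk]; exact hjS
      have hijT : ({i, j} : Finset (Fin m)) ⊆ T := by
        intro k hk
        rcases Finset.mem_insert.mp hk with rfl | hk
        · exact hiT
        · rw [Finset.mem_singleton.mp hk]; exact hjT
      have hUsub : U ⊆ (S \ {i, j}) ∪ (T \ S) := by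
        intro k hk
        have hk' : e k - w k ≠ 0 := by
          have := (Finset.mem_filter.mp hk).2
          simpa using this
        by_cases hkS : e k ≠ 0
        · refine Finset.mem_union_left _ (Finset.mem_sdiff.mpr ⟨by simp [hS, hkS], ?_⟩)
          intro hkij
          rcases Finset.mem_insert.mp hkij with rfl | hkij
          · rw [zmod2_ne_zero hei, zmod2_ne_zero hwi] at hk'
            simp at hk'
          · rw [Finset.mem_singleton.mp hkij] at hk'
            rw [zmod2_ne_zero hej, zmod2_ne_zero hwj] at hk'
            simp at hk'
        · push_neg at hkS
          have hwk : w k ≠ 0 := by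
            intro h0; rw [hkS, h0] at hk'; simp at hk'
          exact Finset.mem_union_right _
            (Finset.mem_sdiff.mpr ⟨by simp [hT, hwk], by simp [hS, hkS]⟩)
      have hcard2 : ({i, j} : Finset (Fin m)).card = 2 := by
        rw [Finset.card_insert_of_notMem (by simp [hij]), Finset.card_singleton]
      have hSm : (S \ {i, j}).card = S.card - 2 := by
        rw [Finset.card_sdiff_of_subset hijS, hcard2]
      have hTS : (T \ S).card ≤ 1 := by
        have hsub : T \ S ⊆ T \ {i, j} := Finset.sdiff_subset_sdiff le_rfl hijS
        have := Finset.card_le_card hsub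
        have hT2 : (T \ {i, j}).card = T.card - 2 := by
          rw [Finset.card_sdiff_of_subset hijT, hcard2]
        have hTcard : T.card = 3 := hwn
        omega
      have hUcard : U.card ≤ S.card - 2 + 1 := by
        have := Finset.card_le_card hUsub
        have := Finset.card_union_le (S \ {i, j}) (T \ S)
        omega
      have hdist : hammingDist v (c + w) = U.card := by
        rw [hd_eq_hn_sub]
        have : v - (c + w) = e - w := by rw [he]; abel
        rw [this]
        rfl
      have hScard : S.card = hammingDist v c := hen.symm
      omega
  -- perfectness
  have hperfect : ∀ v : BV m, ∃! c, c ∈ (C : Set (BV m)) ∧ hammingDist v c ≤ 1 := by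
    intro v
    obtain ⟨c, hc, hd⟩ := hcover (hammingDist v 0) v 0 C.zero_mem le_rfl
    refine ⟨c, ⟨hc, hd⟩, ?_⟩
    rintro c' ⟨hc', hd'⟩
    by_contra hne
    have h3 := hδ.2 c' hc' c hc hne
    have htri : hammingDist c' c ≤ hammingDist c' v + hammingDist v c :=
      hammingDist_triangle _ _ _
    rw [hammingDist_comm c' v] at htri
    omega
  refine ⟨hperfect, ?_⟩
  -- neighbour transitivity
  have hmemX : ∀ σ ∈ G, ∀ c ∈ C, bperm σ c ∈ X := by
    intro σ hσ c hc
    rw [hX]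
    exact ⟨σ, hσ, c, hc, fun v => rfl⟩
  intro j hj u hu v hv
  interval_cases j
  · -- j = 0: u, v ∈ C
    obtain ⟨⟨cu, hcu, hdu⟩, _⟩ := hu
    obtain ⟨⟨cv, hcv, hdv⟩, _⟩ := hv
    have huC : u ∈ C := by rwa [eq_of_hammingDist_eq_zero hdu]
    have hvC : v ∈ C := by rwa [eq_of_hammingDist_eq_zero hdv]
    refine ⟨bperm 1 (v - u), hmemX 1 G.one_mem _ (C.sub_mem hvC huC), ?_⟩
    show (fun i => u ((1 : Perm (Fin m)).symm i)) + (v - u) = v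
    funext k
    show u k + (v k - u k) = v k
    abel
  · -- j = 1
    obtain ⟨⟨cu, hcu, hdu⟩, _⟩ := hu
    obtain ⟨⟨cv, hcv, hdv⟩, _⟩ := hv
    obtain ⟨i, hiu⟩ : ∃ i, u - cu = Pi.single i 1 := by
      apply norm_one
      rw [← hd_eq_hn_sub]; exact hdu
    obtain ⟨i', hiv⟩ : ∃ i', v - cv = Pi.single i' 1 := by
      apply norm_one
      rw [← hd_eq_hn_sub]; exact hdv
    obtain ⟨σ, hσG, hσi⟩ := hGtrans i i'
    have hsingle : (fun k => (Pi.single i 1 : BV m) (σ.symm k)) = (Pi.single i' 1 : BV m) := by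
      funext k
      simp only [Pi.single_apply]
      have hiff : σ.symm k = i ↔ k = i' := by
        rw [Equiv.symm_apply_eq, hσi]
      simp [hiff]
    have hucomp : (fun k => u (σ.symm k)) =
        (fun k => cu (σ.symm k)) + Pi.single i' 1 := by
      have hu' : u = cu + Pi.single i 1 := by
        rw [← hiu]; abel
      funext k
      have h2 := congrFun hsingle k
      rw [hu']
      show cu (σ.symm k) + (Pi.single i 1 : BV m) (σ.symm k) =
        cu (σ.symm k) + (Pi.single i' 1 : BV m) k
      rw [h2]
    have hccC : v - (fun k => u (σ.symm k)) ∈ C := by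
      have hv' : v = cv + Pi.single i' 1 := by rw [← hiv]; abel
      have : v - (fun k => u (σ.symm k)) = cv - (fun k => cu (σ.symm k)) := by
        rw [hucomp, hv']; abel
      rw [this]
      exact C.sub_mem hcv (hInv σ hσG cu hcu)
    refine ⟨bperm σ (v - (fun k => u (σ.symm k))), hmemX σ hσG _ hccC, ?_⟩
    show (fun k => u (σ.symm k)) + (v - (fun k => u (σ.symm k))) = v
    funext k
    simp


end Paper
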